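/- Let S, m, x be nonzero reals satisfying p1(S,m,x) = 0 where p1(S,m,x) = S^4 - 2S^2 x m + x^2 m^2 - 2S^3 + 2S^2 x - 2S x m + 2x^2 m + S^2 - 2S x + x^2, and let z := (x(m+1) - S(S+1))/(2S). Then m·x = (x + z^2 + z)^2. -/

import Mathlib

theorem stmt_1 (S m x : ℝ) (hS : S ≠ 0) (hm : m ≠ 0) (hx : x ≠ 0)
    (hp1 : S^4 - 2*S^2*x*m + x^2*m^2 - 2*S^3 + 2*S^2*x - 2*S*x*m + 2*x^2*m
      + S^2 - 2*S*x + x^2 = 0) :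
    m * x = (x + ((x*(m+1) - S*(S+1))/(2*S))^2 + (x*(m+1) - S*(S+1))/(2*S))^2 := by
  field_simp
  linear_combination (-S^4 - 2*S^3 + 2*S^2*m*x - 2*S^2*x - S^2 - 2*S*m*x
    - 2*S*x - m^2*x^2 - 2*m*x^2 - x^2) * hp1
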